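/- Let g₀ ∈ Matₙ(ℝ) be symmetric and positive definite, let A ∈ Matₙ(ℝ), and define g(u) := exp(uA)·g₀·exp(uAᵀ) for u ∈ ℝ. Then for every u ∈ ℝ, tr( (1/4)·(g(u)⁻¹·g'(u))² − (1/2)·g(u)⁻¹·g''(u) ) = −(1/4)·tr( (A + g₀·Aᵀ·g₀⁻¹)² ). -/

import Mathlib

open Matrix

attribute [local instance] Matrix.frobeniusNormedAddCommGroup Matrix.frobeniusNormedSpace

/-- The orbit `g(u) = exp(uA) g₀ exp(uAᵀ)` of a one-parameter subgroup of `GL(n,ℝ)`. -/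
noncomputable def orbitCurve {n : ℕ} (g₀ A : Matrix (Fin n) (Fin n) ℝ) :
    ℝ → Matrix (Fin n) (Fin n) ℝ :=
  fun u => NormedSpace.exp (u • A) * g₀ * NormedSpace.exp (u • Aᵀ)

section Aux

attribute [local instance] Matrix.frobeniusNormedRing Matrix.frobeniusNormedAlgebra

variable {n : ℕ}

lemma orbitCurve_hasDerivAt (g₀ A : Matrix (Fin n) (Fin n) ℝ) (u : ℝ) :
    HasDerivAt (orbitCurve g₀ A)
      (A * orbitCurve g₀ A u + orbitCurve g₀ A u * Aᵀ) u := by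
  have h1 := hasDerivAt_exp_smul_const' (𝕂 := ℝ) A u
  have h2 := hasDerivAt_exp_smul_const (𝕂 := ℝ) Aᵀ u
  have h := (h1.mul_const g₀).mul h2
  exact h.congr_deriv (by simp only [orbitCurve, mul_assoc]; rfl)

lemma orbitCurve_deriv (g₀ A : Matrix (Fin n) (Fin n) ℝ) :
    deriv (orbitCurve g₀ A)
      = fun u => A * orbitCurve g₀ A u + orbitCurve g₀ A u * Aᵀ := by
  funext u
  exact (orbitCurve_hasDerivAt g₀ A u).deriv

lemma orbitCurve_deriv2 (g₀ A : Matrix (Fin n) (Fin n) ℝ) (u : ℝ) :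
    deriv (deriv (orbitCurve g₀ A)) u
      = A * (A * orbitCurve g₀ A u + orbitCurve g₀ A u * Aᵀ)
        + (A * orbitCurve g₀ A u + orbitCurve g₀ A u * Aᵀ) * Aᵀ := by
  rw [orbitCurve_deriv]
  exact (((orbitCurve_hasDerivAt g₀ A u).const_mul A).add
    ((orbitCurve_hasDerivAt g₀ A u).mul_const Aᵀ)).deriv

lemma orbitCurve_isUnit_det (g₀ A : Matrix (Fin n) (Fin n) ℝ) (hpos : g₀.PosDef) (u : ℝ) :
    IsUnit (orbitCurve g₀ A u).det := by
  have hE : IsUnit (NormedSpace.exp (u • A)).det :=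
    (Matrix.isUnit_iff_isUnit_det _).mp (Matrix.isUnit_exp _)
  have hF : IsUnit (NormedSpace.exp (u • Aᵀ)).det :=
    (Matrix.isUnit_iff_isUnit_det _).mp (Matrix.isUnit_exp _)
  have hg : IsUnit g₀.det := isUnit_iff_ne_zero.mpr hpos.det_pos.ne'
  simp only [orbitCurve, Matrix.det_mul]
  exact (hE.mul hg).mul hF

end Aux

/-- For `g₀` symmetric positive definite, `A` arbitrary, and
`g(u) = exp(uA) g₀ exp(uAᵀ)`, the Ricci coefficient
`tr((1/4)(g⁻¹g')² − (1/2)g⁻¹g'')` is the constant `−(1/4) tr((A + g₀Aᵀg₀⁻¹)²)`. -/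
theorem ricci_of_one_parameter_orbit {n : ℕ} (g₀ A : Matrix (Fin n) (Fin n) ℝ)
    (hsym : g₀ᵀ = g₀) (hpos : g₀.PosDef) (u : ℝ) :
    ((1/4 : ℝ) • ((orbitCurve g₀ A u)⁻¹ * deriv (orbitCurve g₀ A) u) ^ 2 -
     (1/2 : ℝ) • ((orbitCurve g₀ A u)⁻¹ * deriv (deriv (orbitCurve g₀ A)) u)).trace
    = -(1/4) * ((A + g₀ * Aᵀ * g₀⁻¹) ^ 2).trace := by
  set E := NormedSpace.exp (u • A) with hE
  set F := NormedSpace.exp (u • Aᵀ) with hF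
  set g := orbitCurve g₀ A u with hg
  have hgdef : g = E * g₀ * F := rfl
  -- units
  have hdet : IsUnit g.det := orbitCurve_isUnit_det g₀ A hpos u
  have hd0 : IsUnit g₀.det := isUnit_iff_ne_zero.mpr hpos.det_pos.ne'
  have h1 : g⁻¹ * g = 1 := Matrix.nonsing_inv_mul g hdet
  have h2 : g * g⁻¹ = 1 := Matrix.mul_nonsing_inv g hdet
  have h01 : g₀⁻¹ * g₀ = 1 := Matrix.nonsing_inv_mul g₀ hd0
  -- derivatives
  have hg' : deriv (orbitCurve g₀ A) u = A * g + g * Aᵀ := by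
    rw [orbitCurve_deriv]
  have hg'' : deriv (deriv (orbitCurve g₀ A)) u
      = A * (A * g + g * Aᵀ) + (A * g + g * Aᵀ) * Aᵀ := orbitCurve_deriv2 g₀ A u
  -- trace of Aᵀ * Aᵀ
  have htAt : (Aᵀ * Aᵀ).trace = (A * A).trace := by
    rw [← Matrix.transpose_mul, Matrix.trace_transpose]
  -- the cross term
  have hconj : (g⁻¹ * (A * (g * Aᵀ))).trace = (g₀⁻¹ * (A * (g₀ * Aᵀ))).trace := by
    have hEinv : IsUnit E.det := (Matrix.isUnit_iff_isUnit_det _).mp (Matrix.isUnit_exp _)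
    have hFinv : IsUnit F.det := (Matrix.isUnit_iff_isUnit_det _).mp (Matrix.isUnit_exp _)
    have hE1 : E⁻¹ * E = 1 := Matrix.nonsing_inv_mul E hEinv
    have hF2 : F * F⁻¹ = 1 := Matrix.mul_nonsing_inv F hFinv
    have hAE : A * E = E * A :=
      (((Commute.refl A).smul_left u).exp_left).symm.eq
    have hAF : Aᵀ * F = F * Aᵀ :=
      (((Commute.refl Aᵀ).smul_left u).exp_left).symm.eq
    have hginv : g⁻¹ = F⁻¹ * (g₀⁻¹ * E⁻¹) := by
      rw [hgdef, Matrix.mul_inv_rev, Matrix.mul_inv_rev]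
    rw [hginv, hgdef]
    have : F⁻¹ * (g₀⁻¹ * E⁻¹) * (A * (E * g₀ * F * Aᵀ))
        = F⁻¹ * ((g₀⁻¹ * (A * (g₀ * Aᵀ))) * F) := by
      calc F⁻¹ * (g₀⁻¹ * E⁻¹) * (A * (E * g₀ * F * Aᵀ))
          = F⁻¹ * (g₀⁻¹ * (E⁻¹ * (A * E) * (g₀ * (F * Aᵀ)))) := by
            simp only [Matrix.mul_assoc]
        _ = F⁻¹ * (g₀⁻¹ * (E⁻¹ * (E * A) * (g₀ * (F * Aᵀ)))) := by rw [hAE]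
        _ = F⁻¹ * (g₀⁻¹ * (A * (g₀ * (Aᵀ * F)))) := by
            rw [← Matrix.mul_assoc E⁻¹ E A, hE1, one_mul, ← hAF]
        _ = F⁻¹ * ((g₀⁻¹ * (A * (g₀ * Aᵀ))) * F) := by simp only [Matrix.mul_assoc]
    rw [this, Matrix.trace_mul_comm, Matrix.mul_assoc, hF2, Matrix.mul_one]
  -- expand LHS
  have hX : g⁻¹ * (A * g + g * Aᵀ) = g⁻¹ * (A * g) + Aᵀ := by
    rw [mul_add, ← Matrix.mul_assoc g⁻¹ g Aᵀ, h1, one_mul]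
  have hXsq : (g⁻¹ * (A * g) + Aᵀ) ^ 2
      = g⁻¹ * (A * (A * g)) + g⁻¹ * (A * (g * Aᵀ)) + Aᵀ * (g⁻¹ * (A * g)) + Aᵀ * Aᵀ := by
    have hxx : (g⁻¹ * (A * g)) * (g⁻¹ * (A * g)) = g⁻¹ * (A * (A * g)) := by
      calc (g⁻¹ * (A * g)) * (g⁻¹ * (A * g))
          = g⁻¹ * (A * (g * g⁻¹) * (A * g)) := by simp only [Matrix.mul_assoc]
        _ = g⁻¹ * (A * (A * g)) := by rw [h2, Matrix.mul_one]
    rw [pow_two, add_mul, mul_add, mul_add, hxx, Matrix.mul_assoc (g⁻¹) (A*g) Aᵀ,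
      Matrix.mul_assoc A g Aᵀ]
    abel
  have key1 : ((g⁻¹ * deriv (orbitCurve g₀ A) u) ^ 2).trace
      = 2 * (A * A).trace + 2 * (g₀⁻¹ * (A * (g₀ * Aᵀ))).trace := by
    rw [hg', hX, hXsq]
    have t1 : (g⁻¹ * (A * (A * g))).trace = (A * A).trace := by
      rw [Matrix.trace_mul_comm]
      simp only [Matrix.mul_assoc]
      rw [h2, Matrix.mul_one]
    have t3 : (Aᵀ * (g⁻¹ * (A * g))).trace = (g⁻¹ * (A * (g * Aᵀ))).trace := by
      rw [Matrix.trace_mul_comm]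
      simp only [Matrix.mul_assoc]
    simp only [Matrix.trace_add, t1, t3, htAt, hconj]
    ring
  have key2 : (g⁻¹ * deriv (deriv (orbitCurve g₀ A)) u).trace
      = 2 * (A * A).trace + 2 * (g₀⁻¹ * (A * (g₀ * Aᵀ))).trace := by
    rw [hg'']
    have hgg : ∀ X : Matrix (Fin n) (Fin n) ℝ, g⁻¹ * (g * X) = X := fun X => by
      rw [← Matrix.mul_assoc, h1, one_mul]
    have expand : g⁻¹ * (A * (A * g + g * Aᵀ) + (A * g + g * Aᵀ) * Aᵀ)
        = g⁻¹ * (A * (A * g)) + g⁻¹ * (A * (g * Aᵀ))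
          + (g⁻¹ * (A * (g * Aᵀ)) + Aᵀ * Aᵀ) := by
      simp only [mul_add, add_mul, Matrix.mul_assoc, hgg]
    rw [expand]
    have t1 : (g⁻¹ * (A * (A * g))).trace = (A * A).trace := by
      rw [Matrix.trace_mul_comm]
      simp only [Matrix.mul_assoc]
      rw [h2, Matrix.mul_one]
    simp only [Matrix.trace_add, t1, htAt, hconj]
    ring
  -- expand RHS
  have keyR : ((A + g₀ * Aᵀ * g₀⁻¹) ^ 2).trace
      = 2 * (A * A).trace + 2 * (g₀⁻¹ * (A * (g₀ * Aᵀ))).trace := by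
    have h02 : g₀ * g₀⁻¹ = 1 := Matrix.mul_nonsing_inv g₀ hd0
    rw [pow_two, add_mul, mul_add, mul_add]
    have r2 : (A * (g₀ * Aᵀ * g₀⁻¹)).trace = (g₀⁻¹ * (A * (g₀ * Aᵀ))).trace := by
      rw [Matrix.trace_mul_comm, Matrix.mul_assoc (g₀*Aᵀ) g₀⁻¹ A, Matrix.trace_mul_comm]
      simp only [Matrix.mul_assoc]
    have r3 : ((g₀ * Aᵀ * g₀⁻¹) * A).trace = (g₀⁻¹ * (A * (g₀ * Aᵀ))).trace := by
      rw [Matrix.mul_assoc (g₀*Aᵀ) g₀⁻¹ A, Matrix.trace_mul_comm]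
      simp only [Matrix.mul_assoc]
    have r4 : ((g₀ * Aᵀ * g₀⁻¹) * (g₀ * Aᵀ * g₀⁻¹)).trace = (A * A).trace := by
      have : (g₀ * Aᵀ * g₀⁻¹) * (g₀ * Aᵀ * g₀⁻¹) = g₀ * (Aᵀ * Aᵀ) * g₀⁻¹ := by
        calc (g₀ * Aᵀ * g₀⁻¹) * (g₀ * Aᵀ * g₀⁻¹)
            = g₀ * (Aᵀ * ((g₀⁻¹ * g₀) * (Aᵀ * g₀⁻¹))) := by simp only [Matrix.mul_assoc]
          _ = g₀ * (Aᵀ * Aᵀ) * g₀⁻¹ := by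
              rw [h01, one_mul]; simp only [Matrix.mul_assoc]
      rw [this, Matrix.trace_mul_comm, ← Matrix.mul_assoc, h01, one_mul, htAt]
    simp only [Matrix.trace_add, r2, r3, r4]
    ring
  rw [Matrix.trace_sub, Matrix.trace_smul, Matrix.trace_smul, key1, key2, keyR]
  simp only [smul_eq_mul]
  ring
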